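/- Let α ≥ 1 and R(x,y) = (x⁴−y⁴)^α(x⁴+y⁴)(x⁸−34x⁴y⁴+y⁸) over the rationals. If the coefficient of (x⁴)^{α+3−i}(−y⁴)^i in R vanishes for some i with 0 ≤ i ≤ (α+3)/2, then α = 2i − 3. -/

import Mathlib

open MvPolynomial

noncomputable abbrev Rpoly (α : ℕ) : MvPolynomial (Fin 2) ℚ :=
  ((X 0)^4 - (X 1)^4)^α * ((X 0)^4 + (X 1)^4)
    * ((X 0)^8 - 34 * (X 0)^4 * (X 1)^4 + (X 1)^8)

theorem single_eq_iff (s t a b : ℕ) :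
    Finsupp.single (0:Fin 2) a + Finsupp.single (1:Fin 2) b
      = Finsupp.single (0:Fin 2) s + Finsupp.single (1:Fin 2) t ↔ a = s ∧ b = t := by
  constructor
  · intro h
    exact ⟨by simpa [Finsupp.single_apply] using DFunLike.congr_fun h 0,
      by simpa [Finsupp.single_apply] using DFunLike.congr_fun h 1⟩
  · rintro ⟨rfl, rfl⟩; rfl

theorem coeff_uv (s t a b : ℕ) :
    coeff (Finsupp.single (0:Fin 2) s + Finsupp.single (1:Fin 2) t)
      ((X 0)^a * (X 1)^b : MvPolynomial (Fin 2) ℚ) = if a = s ∧ b = t then 1 else 0 := by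
  rw [X_pow_eq_monomial, X_pow_eq_monomial, monomial_mul, mul_one, coeff_monomial]
  simp [single_eq_iff]

theorem term_eq (α k : ℕ) :
    ((-1 : MvPolynomial (Fin 2) ℚ))^(k+α) * ((X 0)^4)^k * ((X 1)^4)^(α-k) * (α.choose k : MvPolynomial (Fin 2) ℚ)
      * ((X 0)^4 + (X 1)^4) * ((X 0)^8 - 34 * (X 0)^4 * (X 1)^4 + (X 1)^8)
    = C (((-1:ℚ))^(k+α) * (α.choose k : ℚ)) *
      ((X 0)^(4*k+12) * (X 1)^(4*(α-k))
       - C (33:ℚ) * ((X 0)^(4*k+8) * (X 1)^(4*(α-k)+4))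
       - C (33:ℚ) * ((X 0)^(4*k+4) * (X 1)^(4*(α-k)+8))
       + (X 0)^(4*k) * (X 1)^(4*(α-k)+12)) := by
  have h1 : (C (((-1:ℚ))^(k+α) * (α.choose k : ℚ)) : MvPolynomial (Fin 2) ℚ)
      = (-1)^(k+α) * (α.choose k : MvPolynomial (Fin 2) ℚ) := by
    push_cast [map_mul, map_pow, map_neg, map_one]
    simp
  rw [h1, map_ofNat C 33]
  ring

theorem sum_piece {P : ℕ → Prop} [DecidablePred P] {Q : Prop} [Decidable Q] (n t : ℕ) (c : ℕ → ℚ)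
    (h1 : ∀ x, x ≤ n → P x → Q ∧ x = t)
    (h2 : Q → t ≤ n ∧ P t) :
    ∑ x ∈ Finset.range (n+1), (if P x then c x else 0) = if Q then c t else 0 := by
  by_cases hq : Q
  · obtain ⟨ht, hPt⟩ := h2 hq
    rw [if_pos hq]
    rw [Finset.sum_eq_single t (fun b hb hbt => by
        rw [if_neg]
        intro hPb
        exact hbt (h1 b (Nat.lt_succ_iff.mp (Finset.mem_range.mp hb)) hPb).2)
      (fun ht' => absurd (Finset.mem_range.mpr (Nat.lt_succ_iff.mpr ht)) ht')]
    rw [if_pos hPt]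
  · rw [if_neg hq]
    apply Finset.sum_eq_zero
    intro x hx
    rw [if_neg]
    intro hP
    exact hq (h1 x (Nat.lt_succ_iff.mp (Finset.mem_range.mp hx)) hP).1

theorem neg_one_pow_congr' (a b : ℕ) (h : a % 2 = b % 2) : ((-1:ℚ))^a = (-1)^b := by
  rw [← Nat.div_add_mod a 2, ← Nat.div_add_mod b 2, pow_add, pow_add, pow_mul, pow_mul]
  norm_num [h]

theorem coeff_R (α i : ℕ) (hi : i ≤ α + 3) :
    coeff (Finsupp.single (0:Fin 2) (4*(α+3-i)) + Finsupp.single (1:Fin 2) (4*i)) (Rpoly α)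
    = (if i ≤ α then ((-1):ℚ)^i * α.choose i else 0)
      - (if 1 ≤ i ∧ i ≤ α+1 then (33:ℚ) * (-1)^(i-1) * α.choose (i-1) else 0)
      - (if 2 ≤ i ∧ i ≤ α+2 then (33:ℚ) * (-1)^(i-2) * α.choose (i-2) else 0)
      + (if 3 ≤ i then ((-1):ℚ)^(i-3) * α.choose (i-3) else 0) := by
  unfold Rpoly
  rw [sub_pow, Finset.sum_mul, Finset.sum_mul, coeff_sum]
  rw [Finset.sum_congr rfl (fun k _ => congrArg _ (term_eq α k))]
  simp only [coeff_C_mul, coeff_add, coeff_sub, coeff_uv]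
  simp only [mul_sub, mul_add, mul_ite, mul_one, mul_zero, Finset.sum_sub_distrib,
    Finset.sum_add_distrib]
  have p0 : ∑ x ∈ Finset.range (α+1),
      (if 4*x+12 = 4*(α+3-i) ∧ 4*(α-x) = 4*i then ((-1:ℚ))^(x+α) * α.choose x else 0)
      = if i ≤ α then ((-1):ℚ)^i * α.choose i else 0 := by
    rw [sum_piece (P := fun x => 4*x+12 = 4*(α+3-i) ∧ 4*(α-x) = 4*i) (Q := i ≤ α) α (α-i)
      (fun x => ((-1:ℚ))^(x+α) * α.choose x)
      (fun x hx hP => by omega) (fun hq => by omega)]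
    by_cases hq : i ≤ α
    · rw [if_pos hq, if_pos hq, neg_one_pow_congr' (α-i+α) i (by omega), Nat.choose_symm hq]
    · rw [if_neg hq, if_neg hq]
  have p1 : ∑ x ∈ Finset.range (α+1),
      (if 4*x+8 = 4*(α+3-i) ∧ 4*(α-x)+4 = 4*i then ((-1:ℚ))^(x+α) * α.choose x * 33 else 0)
      = if 1 ≤ i ∧ i ≤ α+1 then (33:ℚ) * (-1)^(i-1) * α.choose (i-1) else 0 := by
    rw [sum_piece (P := fun x => 4*x+8 = 4*(α+3-i) ∧ 4*(α-x)+4 = 4*i) (Q := 1 ≤ i ∧ i ≤ α+1)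
      α (α+1-i) (fun x => ((-1:ℚ))^(x+α) * α.choose x * 33)
      (fun x hx hP => by omega) (fun hq => by omega)]
    by_cases hq : 1 ≤ i ∧ i ≤ α+1
    · rw [if_pos hq, if_pos hq, neg_one_pow_congr' (α+1-i+α) (i-1) (by omega),
        show α+1-i = α-(i-1) by omega, Nat.choose_symm (by omega)]
      ring
    · rw [if_neg hq, if_neg hq]
  have p2 : ∑ x ∈ Finset.range (α+1),
      (if 4*x+4 = 4*(α+3-i) ∧ 4*(α-x)+8 = 4*i then ((-1:ℚ))^(x+α) * α.choose x * 33 else 0)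
      = if 2 ≤ i ∧ i ≤ α+2 then (33:ℚ) * (-1)^(i-2) * α.choose (i-2) else 0 := by
    rw [sum_piece (P := fun x => 4*x+4 = 4*(α+3-i) ∧ 4*(α-x)+8 = 4*i) (Q := 2 ≤ i ∧ i ≤ α+2)
      α (α+2-i) (fun x => ((-1:ℚ))^(x+α) * α.choose x * 33)
      (fun x hx hP => by omega) (fun hq => by omega)]
    by_cases hq : 2 ≤ i ∧ i ≤ α+2
    · rw [if_pos hq, if_pos hq, neg_one_pow_congr' (α+2-i+α) (i-2) (by omega),
        show α+2-i = α-(i-2) by omega, Nat.choose_symm (by omega)]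
      ring
    · rw [if_neg hq, if_neg hq]
  have p3 : ∑ x ∈ Finset.range (α+1),
      (if 4*x = 4*(α+3-i) ∧ 4*(α-x)+12 = 4*i then ((-1:ℚ))^(x+α) * α.choose x else 0)
      = if 3 ≤ i then ((-1):ℚ)^(i-3) * α.choose (i-3) else 0 := by
    rw [sum_piece (P := fun x => 4*x = 4*(α+3-i) ∧ 4*(α-x)+12 = 4*i) (Q := 3 ≤ i)
      α (α+3-i) (fun x => ((-1:ℚ))^(x+α) * α.choose x)
      (fun x hx hP => by omega) (fun hq => by omega)]
    by_cases hq : 3 ≤ i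
    · rw [if_pos hq, if_pos hq, neg_one_pow_congr' (α+3-i+α) (i-3) (by omega),
        show α+3-i = α-(i-3) by omega, Nat.choose_symm (by omega)]
    · rw [if_neg hq, if_neg hq]
  rw [p0, p1, p2, p3]

theorem choose_step_le (n k : ℕ) (h : 2*k+1 ≤ n) : n.choose k ≤ n.choose (k+1) := by
  have h1 := Nat.choose_succ_right_eq n k
  have h3 : n.choose k * (k+1) ≤ n.choose k * (n-k) := Nat.mul_le_mul_left _ (by omega)
  rw [← h1] at h3
  exact Nat.le_of_mul_le_mul_right h3 (Nat.succ_pos k)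

theorem choose_step_lt (n k : ℕ) (h : 2*k+2 ≤ n) : n.choose k < n.choose (k+1) := by
  have h1 := Nat.choose_succ_right_eq n k
  have hp := Nat.choose_pos (show k ≤ n by omega)
  have h3 : n.choose k * (k+2) ≤ n.choose k * (n-k) := Nat.mul_le_mul_left _ (by omega)
  rw [← h1] at h3
  have : n.choose k * (k+1) < n.choose (k+1) * (k+1) := by nlinarith
  exact Nat.lt_of_mul_lt_mul_right this

theorem choose_mono_half (n a b : ℕ) (hab : a ≤ b) (hn : 2*b ≤ n) : n.choose a ≤ n.choose b := by
  induction b with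
  | zero => interval_cases a; rfl
  | succ b ih =>
    rcases Nat.eq_or_lt_of_le hab with rfl | hlt
    · exact le_rfl
    · exact le_trans (ih (by omega) (by omega)) (choose_step_le n b (by omega))

theorem choose_mono' (n a b : ℕ) (hab : a ≤ b) (hn : a + b ≤ n) : n.choose a ≤ n.choose b := by
  rcases le_or_gt (2*b) n with hb | hb
  · exact choose_mono_half n a b hab hb
  · rw [← Nat.choose_symm (show b ≤ n by omega)]
    exact choose_mono_half n a (n-b) (by omega) (by omega)

theorem stmt_12 (α i : ℕ) (hα : 1 ≤ α) (hi : 2 * i ≤ α + 3)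
    (h : MvPolynomial.coeff
      (Finsupp.single (0 : Fin 2) (4 * (α + 3 - i)) + Finsupp.single (1 : Fin 2) (4 * i))
      (Rpoly α) = 0) :
    (α : ℤ) = 2 * (i : ℤ) - 3 := by
  have hc := coeff_R α i (by omega)
  rw [h] at hc
  by_cases h3 : 3 ≤ i
  · -- all four conditions hold since i ≤ α
    have hia : i ≤ α := by omega
    rw [if_pos hia, if_pos (by omega : 1 ≤ i ∧ i ≤ α+1),
      if_pos (by omega : 2 ≤ i ∧ i ≤ α+2), if_pos h3] at hc
    obtain ⟨m, rfl⟩ : ∃ m, i = m + 3 := ⟨i - 3, by omega⟩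
    have e1 : m + 3 - 1 = m + 2 := rfl
    have e2 : m + 3 - 2 = m + 1 := rfl
    have e3 : m + 3 - 3 = m := rfl
    rw [e1, e2, e3] at hc
    have h2 : ((-1:ℚ))^m * ((-1:ℚ))^m = 1 := by
      rw [← pow_add, ← two_mul, pow_mul]; norm_num
    have key : (α.choose (m+3) : ℚ) + 33 * α.choose (m+2)
        = α.choose m + 33 * α.choose (m+1) := by
      linear_combination ((-1:ℚ))^m * hc
        - ((α.choose (m+3) : ℚ) + 33 * α.choose (m+2) - 33 * α.choose (m+1) - α.choose m) * h2
    have keyN : α.choose (m+3) + 33 * α.choose (m+2) = α.choose m + 33 * α.choose (m+1) := by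
      exact_mod_cast key
    by_contra hne
    have hlt : 2*m + 4 ≤ α := by omega
    have s1 : α.choose (m+1) < α.choose (m+2) := choose_step_lt α (m+1) (by omega)
    have s2 := choose_mono' α m (m+3) (by omega) (by omega)
    omega
  · interval_cases i
    · rw [if_pos (by omega : 0 ≤ α), if_neg (by omega), if_neg (by omega), if_neg (by omega)] at hc
      norm_num at hc
    · rw [if_pos hα, if_pos (by omega : 1 ≤ 1 ∧ 1 ≤ α+1), if_neg (by omega), if_neg (by omega)] at hc
      simp only [pow_one, Nat.choose_one_right, Nat.sub_self, pow_zero, Nat.choose_zero_right,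
        Nat.cast_one, mul_one] at hc
      have : (0:ℚ) ≤ (α:ℚ) := by positivity
      norm_num at hc
      linarith
    · by_cases hα2 : 2 ≤ α
      · rw [if_pos hα2, if_pos (by omega : 1 ≤ 2 ∧ 2 ≤ α+1), if_pos (by omega : 2 ≤ 2 ∧ 2 ≤ α+2),
          if_neg (by omega)] at hc
        norm_num at hc
        have h1 : (1:ℚ) ≤ (α.choose 2 : ℚ) := by
          exact_mod_cast Nat.one_le_cast.mpr (Nat.choose_pos (by omega))
        have h2 : (2:ℚ) ≤ (α:ℚ) := by exact_mod_cast hα2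
        nlinarith [hc]
      · have : α = 1 := by omega
        subst this
        norm_num
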